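/- Let p > 1 be a real number, N ≥ 0 an integer, and for each 0 ≤ i ≤ N let V_i be a finite-dimensional ℂ-vector space with an automorphism F_i all of whose eigenvalues have complex absolute value p^{i/2}. If ∑_{i=0}^{N} (−1)^i Tr(F_i^a | V_i) = 0 for every integer a ≥ 1, then V_i = 0 for all i. -/

import Mathlib

open Module LinearMap Set Finset

/-- If a finite family of nonzero coefficients attached to distinct nonzero complex numbers
has all power sums (for exponents `≥ 1`) vanishing, the family is empty. -/
private lemma aux_powsum (s : Finset ℂ) : ∀ c : ℂ → ℂ, (∀ μ ∈ s, μ ≠ 0) → (∀ μ ∈ s, c μ ≠ 0) →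
    (∀ a : ℕ, 1 ≤ a → ∑ μ ∈ s, c μ * μ ^ a = 0) → s = ∅ := by
  induction s using Finset.strongInduction with
  | _ s ih =>
    intro c h0 hc hsum
    rcases s.eq_empty_or_nonempty with rfl | ⟨μ0, hμ0⟩
    · rfl
    exfalso
    have herase : s.erase μ0 = ∅ := by
      refine ih (s.erase μ0) (Finset.erase_ssubset hμ0) (fun μ ↦ c μ * (μ - μ0))
        (fun μ hμ ↦ h0 μ (Finset.mem_of_mem_erase hμ))
        (fun μ hμ ↦ mul_ne_zero (hc μ (Finset.mem_of_mem_erase hμ))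
          (sub_ne_zero.2 (Finset.ne_of_mem_erase hμ))) ?_
      intro a ha
      have key : ∑ μ ∈ s, c μ * (μ - μ0) * μ ^ a
          = (∑ μ ∈ s, c μ * μ ^ (a + 1)) - μ0 * ∑ μ ∈ s, c μ * μ ^ a := by
        rw [Finset.mul_sum, ← Finset.sum_sub_distrib]
        exact Finset.sum_congr rfl fun μ _ ↦ by ring
      calc ∑ μ ∈ s.erase μ0, c μ * (μ - μ0) * μ ^ a
          = ∑ μ ∈ s, c μ * (μ - μ0) * μ ^ a := Finset.sum_erase _ (by ring)
        _ = 0 := by rw [key, hsum (a + 1) (by omega), hsum a ha, mul_zero, sub_zero]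
    have hs : s = {μ0} := by rw [← Finset.insert_erase hμ0, herase]; rfl
    have h1 := hsum 1 le_rfl
    rw [hs, Finset.sum_singleton, pow_one] at h1
    exact (mul_ne_zero (hc μ0 (by simp [hs])) (h0 μ0 (by simp [hs]))) h1

/-- Trace of a power of an endomorphism which is `μ • 1` plus a nilpotent. -/
private lemma aux_trace_pow {W : Type*} [AddCommGroup W] [Module ℂ W] [FiniteDimensional ℂ W]
    (g : Module.End ℂ W) (μ : ℂ)
    (hn : IsNilpotent (g - algebraMap ℂ (Module.End ℂ W) μ)) (a : ℕ) :
    LinearMap.trace ℂ W (g ^ a) = μ ^ a * (Module.finrank ℂ W : ℂ) := by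
  set n := g - algebraMap ℂ (Module.End ℂ W) μ with hn'
  have hg : g = algebraMap ℂ (Module.End ℂ W) μ + n := by rw [hn']; abel
  have hcomm : Commute (algebraMap ℂ (Module.End ℂ W) μ) n :=
    Algebra.commute_algebraMap_left _ _
  rw [hg, hcomm.add_pow, map_sum, Finset.sum_eq_single a]
  · rw [Nat.sub_self, pow_zero, mul_one, Nat.choose_self, Nat.cast_one, mul_one, ← map_pow,
      Module.algebraMap_end_eq_smul_id, map_smul, trace_id, smul_eq_mul]
  · intro b hb hba
    have hb' : b < a := lt_of_le_of_ne (Nat.lt_succ_iff.mp (Finset.mem_range.mp hb)) hba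
    have hnil : IsNilpotent (algebraMap ℂ (Module.End ℂ W) μ ^ b * n ^ (a - b)
        * (a.choose b : Module.End ℂ W)) := by
      have h1 : IsNilpotent (n ^ (a - b)) := hn.pow_of_pos (by omega)
      have h2 : IsNilpotent (algebraMap ℂ (Module.End ℂ W) μ ^ b * n ^ (a - b)) :=
        (hcomm.pow_pow b (a - b)).isNilpotent_mul_left h1
      exact ((Nat.cast_commute (a.choose b) _).symm).isNilpotent_mul_right h2
    have := LinearMap.isNilpotent_trace_of_isNilpotent hnil
    exact this.eq_zero
  · intro ha; exact absurd (Finset.self_mem_range_succ a) ha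

/-- Purity: if `F_i` is an automorphism of a finite-dimensional ℂ-vector space `V i` all
of whose eigenvalues have absolute value `p^{i/2}` (with `p > 1`), and the alternating sum
of traces of `F_i^a` vanishes for all `a ≥ 1`, then all `V i` vanish. -/
theorem stmt_13 (p : ℝ) (hp : 1 < p) (N : ℕ) (V : Fin (N + 1) → Type*)
    [∀ i, AddCommGroup (V i)] [∀ i, Module ℂ (V i)] [∀ i, FiniteDimensional ℂ (V i)]
    (F : ∀ i, V i ≃ₗ[ℂ] V i)
    (hF : ∀ i : Fin (N + 1), ∀ μ : ℂ, Module.End.HasEigenvalue ((F i).toLinearMap) μ →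
      ‖μ‖ = p ^ (((i : ℕ) : ℝ) / 2))
    (h : ∀ a : ℕ, 1 ≤ a →
      (∑ i : Fin (N + 1), (-1 : ℂ) ^ (i : ℕ) * LinearMap.trace ℂ (V i) ((F i ^ a).toLinearMap)) = 0) :
    ∀ i, Subsingleton (V i) := by
  classical
  set f : ∀ i, Module.End ℂ (V i) := fun i ↦ (F i).toLinearMap with hfdef
  have hFa : ∀ i (a : ℕ), ((F i ^ a).toLinearMap : Module.End ℂ (V i)) = (f i) ^ a := by
    intro i a
    ext x
    simp [LinearEquiv.pow_apply, Module.End.pow_apply, hfdef]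
  have hfin : ∀ i, {μ : ℂ | (f i).maxGenEigenspace μ ≠ ⊥}.Finite := fun i ↦
    WellFoundedGT.finite_ne_bot_of_iSupIndep (f i).independent_maxGenEigenspace
  set S : Fin (N + 1) → Finset ℂ := fun i ↦ (hfin i).toFinset with hSdef
  have hmemS : ∀ i μ, μ ∈ S i ↔ (f i).maxGenEigenspace μ ≠ ⊥ := fun i μ ↦ (hfin i).mem_toFinset
  have hEig : ∀ i μ, μ ∈ S i → (f i).HasEigenvalue μ := by
    intro i μ hμ
    rw [hmemS, Module.End.maxGenEigenspace_eq] at hμ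
    exact Module.End.hasEigenvalue_of_hasGenEigenvalue hμ
  have habs : ∀ i μ, μ ∈ S i → ‖μ‖ = p ^ (((i : ℕ) : ℝ) / 2) := fun i μ hμ ↦
    hF i μ (hEig i μ hμ)
  have hp0 : (0 : ℝ) < p := lt_trans zero_lt_one hp
  have hne0 : ∀ i μ, μ ∈ S i → μ ≠ 0 := by
    intro i μ hμ h0
    have := habs i μ hμ
    rw [h0, norm_zero] at this
    exact absurd this.symm (ne_of_gt (Real.rpow_pos_of_pos hp0 _))
  have hdisj : ∀ i j μ, μ ∈ S i → μ ∈ S j → i = j := by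
    intro i j μ hi hj
    by_contra hij
    have heq : p ^ (((i : ℕ) : ℝ) / 2) = p ^ (((j : ℕ) : ℝ) / 2) :=
      (habs i μ hi).symm.trans (habs j μ hj)
    have : ((i : ℕ) : ℝ) / 2 = ((j : ℕ) : ℝ) / 2 := by
      rcases lt_trichotomy (((i : ℕ) : ℝ) / 2) (((j : ℕ) : ℝ) / 2) with hlt | heq' | hgt
      · exact absurd heq (ne_of_lt ((Real.rpow_lt_rpow_left_iff hp).2 hlt))
      · exact heq'
      · exact absurd heq (ne_of_gt ((Real.rpow_lt_rpow_left_iff hp).2 hgt))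
    have : ((i : ℕ) : ℝ) = ((j : ℕ) : ℝ) := by linarith
    exact hij (Fin.ext (Nat.cast_injective this))
  -- the trace formula
  have htr : ∀ i (a : ℕ), LinearMap.trace ℂ (V i) ((f i) ^ a)
      = ∑ μ ∈ S i, (finrank ℂ ((f i).maxGenEigenspace μ) : ℂ) * μ ^ a := by
    intro i a
    have hint : DirectSum.IsInternal ((f i).maxGenEigenspace) :=
      (DirectSum.isInternal_submodule_iff_iSupIndep_and_iSup_eq_top _).mpr
        ⟨(f i).independent_maxGenEigenspace, (f i).iSup_maxGenEigenspace_eq_top⟩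
    have hmaps : ∀ μ : ℂ, MapsTo ((f i) ^ a) ((f i).maxGenEigenspace μ)
        ((f i).maxGenEigenspace μ) := fun μ ↦
      Module.End.mapsTo_maxGenEigenspace_of_comm ((Commute.refl (f i)).pow_right a) μ
    rw [LinearMap.trace_eq_sum_trace_restrict' hint (hfin i) hmaps]
    refine Finset.sum_congr rfl fun μ hμ ↦ ?_
    have hm1 : ∀ x ∈ (f i).maxGenEigenspace μ, (f i) x ∈ (f i).maxGenEigenspace μ :=
      fun x hx ↦ Module.End.mapsTo_maxGenEigenspace_of_comm (Commute.refl (f i)) μ hx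
    have hrpow : ((f i) ^ a).restrict (hmaps μ) = ((f i).restrict hm1) ^ a :=
      (Module.End.pow_restrict a hm1).symm
    rw [hrpow, mul_comm]
    apply aux_trace_pow
    have hm2 : ∀ x ∈ (f i).maxGenEigenspace μ,
        ((f i) - algebraMap ℂ (Module.End ℂ (V i)) μ) x ∈ (f i).maxGenEigenspace μ :=
      fun x hx ↦ Module.End.mapsTo_maxGenEigenspace_of_comm
        (Algebra.mul_sub_algebraMap_commutes (f i) μ) μ hx
    have hsub : (f i).restrict hm1 - algebraMap ℂ (Module.End ℂ ((f i).maxGenEigenspace μ)) μ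
        = ((f i) - algebraMap ℂ (Module.End ℂ (V i)) μ).restrict hm2 := by
      ext x
      simp [LinearMap.restrict_apply, Module.algebraMap_end_apply]
    rw [hsub]
    exact (f i).isNilpotent_restrict_maxGenEigenspace_sub_algebraMap μ
  -- assemble the global power-sum identity
  set T : Finset ℂ := Finset.univ.biUnion S with hTdef
  set c : ℂ → ℂ := fun μ ↦
    ∑ i : Fin (N + 1), (-1 : ℂ) ^ (i : ℕ) * (finrank ℂ ((f i).maxGenEigenspace μ) : ℂ) with hcdef
  have hd0 : ∀ i μ, μ ∉ S i → (finrank ℂ ((f i).maxGenEigenspace μ) : ℂ) = 0 := by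
    intro i μ hμ
    rw [hmemS, not_not] at hμ
    rw [hμ]
    simp [finrank_bot]
  have hsum : ∀ a : ℕ, 1 ≤ a → ∑ μ ∈ T, c μ * μ ^ a = 0 := by
    intro a ha
    have : ∑ μ ∈ T, c μ * μ ^ a
        = ∑ i : Fin (N + 1), (-1 : ℂ) ^ (i : ℕ) *
            ∑ μ ∈ T, (finrank ℂ ((f i).maxGenEigenspace μ) : ℂ) * μ ^ a := by
      calc ∑ μ ∈ T, c μ * μ ^ a
          = ∑ μ ∈ T, ∑ i : Fin (N + 1),
              (-1 : ℂ) ^ (i : ℕ) * (finrank ℂ ((f i).maxGenEigenspace μ) : ℂ) * μ ^ a :=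
            Finset.sum_congr rfl fun μ _ ↦ by rw [hcdef, Finset.sum_mul]
        _ = ∑ i : Fin (N + 1), ∑ μ ∈ T,
              (-1 : ℂ) ^ (i : ℕ) * (finrank ℂ ((f i).maxGenEigenspace μ) : ℂ) * μ ^ a :=
            Finset.sum_comm
        _ = _ := Finset.sum_congr rfl fun i _ ↦ by
              rw [Finset.mul_sum]
              exact Finset.sum_congr rfl fun μ _ ↦ by ring
    rw [this]
    have hsub : ∀ i : Fin (N + 1), ∑ μ ∈ T, (finrank ℂ ((f i).maxGenEigenspace μ) : ℂ) * μ ^ a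
        = ∑ μ ∈ S i, (finrank ℂ ((f i).maxGenEigenspace μ) : ℂ) * μ ^ a := by
      intro i
      refine (Finset.sum_subset (fun μ hμ ↦ Finset.mem_biUnion.2 ⟨i, Finset.mem_univ i, hμ⟩)
        (fun μ _ hμ ↦ ?_)).symm
      rw [hd0 i μ hμ, zero_mul]
    have := h a ha
    simp only [hFa] at this
    simp only [hsub, ← htr]
    exact this
  have hc0 : ∀ μ ∈ T, c μ ≠ 0 := by
    intro μ hμ
    obtain ⟨j, -, hj⟩ := Finset.mem_biUnion.mp hμ
    have : c μ = (-1 : ℂ) ^ (j : ℕ) * (finrank ℂ ((f j).maxGenEigenspace μ) : ℂ) := by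
      rw [hcdef]
      refine Finset.sum_eq_single j (fun i _ hij ↦ ?_) (fun hj' ↦ absurd (Finset.mem_univ j) hj')
      have hiS : μ ∉ S i := fun hiS ↦ hij (hdisj i j μ hiS hj)
      rw [hd0 i μ hiS, mul_zero]
    rw [this]
    refine mul_ne_zero (pow_ne_zero _ (by norm_num)) ?_
    rw [Nat.cast_ne_zero]
    haveI : Nontrivial ((f j).maxGenEigenspace μ) :=
      Submodule.nontrivial_iff_ne_bot.2 ((hmemS j μ).1 hj)
    exact Module.finrank_pos.ne'
  have hT0 : ∀ μ ∈ T, μ ≠ 0 := by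
    intro μ hμ
    obtain ⟨j, -, hj⟩ := Finset.mem_biUnion.mp hμ
    exact hne0 j μ hj
  have hTempty : T = ∅ := aux_powsum T c hT0 hc0 hsum
  have hSempty : ∀ i, S i = ∅ := by
    intro i
    rw [Finset.eq_empty_iff_forall_notMem]
    intro μ hμ
    have : μ ∈ T := Finset.mem_biUnion.2 ⟨i, Finset.mem_univ i, hμ⟩
    rw [hTempty] at this
    exact absurd this (Finset.notMem_empty μ)
  intro i
  have hbot : ∀ μ : ℂ, (f i).maxGenEigenspace μ = ⊥ := by
    intro μ
    by_contra hb
    have : μ ∈ S i := (hmemS i μ).2 hb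
    rw [hSempty i] at this
    exact absurd this (Finset.notMem_empty μ)
  have htop : (⊤ : Submodule ℂ (V i)) = ⊥ := by
    rw [← (f i).iSup_maxGenEigenspace_eq_top]
    simp [hbot]
  refine subsingleton_of_forall_eq 0 fun x ↦ ?_
  have hx : x ∈ (⊥ : Submodule ℂ (V i)) := htop ▸ Submodule.mem_top
  exact Submodule.mem_bot ℂ |>.1 hx
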